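/- arXiv:1207.0590 — 3 statements merged into one kernel-verified Lean document; each statement's English description precedes it below -/
import Mathlib

section
/- For hermitean positive semidefinite n×n complex matrices A, B, C, the matrix A(Tr(BC) I − BC) + C(Tr(BA) I − BA) is positive semidefinite. -/
open Matrix
open scoped ComplexOrder

private lemma dot_helper {n : ℕ} (M N : Matrix (Fin n) (Fin n) ℂ) (x : Fin n → ℂ) :
    star (M *ᵥ x) ⬝ᵥ (N *ᵥ x) = star x ⬝ᵥ ((Mᴴ * N) *ᵥ x) := by
  simp [star_mulVec, dotProduct_mulVec, vecMul_vecMul]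

private lemma dot_self_real {n : ℕ} (w : Fin n → ℂ) :
    star w ⬝ᵥ w = ((∑ i, Complex.normSq (w i) : ℝ) : ℂ) := by
  push_cast
  simp [dotProduct, Complex.normSq_eq_conj_mul_self, RCLike.star_def]

private lemma star_dot_comm {n : ℕ} (a b : Fin n → ℂ) :
    star b ⬝ᵥ a = (starRingEnd ℂ) (star a ⬝ᵥ b) := by
  simp [dotProduct, map_sum, mul_comm, RCLike.star_def]

private lemma mulVec_normSq_le {n : ℕ} (P : Matrix (Fin n) (Fin n) ℂ) (u : Fin n → ℂ) :
    ∑ i, Complex.normSq ((P *ᵥ u) i)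
      ≤ (∑ i, ∑ j, Complex.normSq (P i j)) * ∑ j, Complex.normSq (u j) := by
  rw [Finset.sum_mul]
  refine Finset.sum_le_sum fun i _ => ?_
  have h1 : ‖(P *ᵥ u) i‖ ≤ ∑ j, ‖P i j‖ * ‖u j‖ := by
    simpa [mulVec, dotProduct, norm_mul] using (norm_sum_le Finset.univ fun j => P i j * u j)
  calc Complex.normSq ((P *ᵥ u) i) = ‖(P *ᵥ u) i‖ ^ 2 := (Complex.sq_norm _).symm
    _ ≤ (∑ j, ‖P i j‖ * ‖u j‖) ^ 2 :=
        pow_le_pow_left₀ (norm_nonneg _) h1 2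
    _ ≤ (∑ j, ‖P i j‖ ^ 2) * ∑ j, ‖u j‖ ^ 2 :=
        Finset.sum_mul_sq_le_sq_mul_sq _ _ _
    _ = _ := by simp [Complex.sq_norm]

open scoped MatrixOrder in
private lemma psd_sqrt_exists {n : ℕ} (A : Matrix (Fin n) (Fin n) ℂ) (hA : A.PosSemidef) :
    ∃ R : Matrix (Fin n) (Fin n) ℂ, Rᴴ = R ∧ R * R = A := by
  classical
  obtain ⟨X, hX, -, hXA⟩ :=
    sub_zero A ▸ CFC.exists_sqrt_of_isSelfAdjoint_of_quasispectrumRestricts hA.isHermitian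
      (QuasispectrumRestricts.nnreal_of_nonneg hA.nonneg)
  exact ⟨X, hX.star_eq, by simpa using hXA⟩

private lemma trace_eq_sum_normSq {n : ℕ} (M : Matrix (Fin n) (Fin n) ℂ) :
    (Mᴴ * M).trace = ((∑ i, ∑ j, Complex.normSq (M i j) : ℝ) : ℂ) := by
  push_cast
  rw [Finset.sum_comm]
  simp [Matrix.trace, Matrix.mul_apply, Matrix.conjTranspose_apply, Matrix.diag,
    Complex.normSq_eq_conj_mul_self, RCLike.star_def]

theorem lms_matrix_inequality_one {n : ℕ} (A B C : Matrix (Fin n) (Fin n) ℂ)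
    (hA : A.PosSemidef) (hB : B.PosSemidef) (hC : C.PosSemidef) :
    (A * ((B * C).trace • (1 : Matrix (Fin n) (Fin n) ℂ) - B * C)
      + C * ((B * A).trace • (1 : Matrix (Fin n) (Fin n) ℂ) - B * A)).PosSemidef := by
  set t := (B * C).trace with ht'
  set s := (B * A).trace with hs'
  have htr : star t = t := by
    calc star t = ((B * C)ᴴ).trace := (trace_conjTranspose _).symm
      _ = (Cᴴ * Bᴴ).trace := by rw [conjTranspose_mul]
      _ = (C * B).trace := by rw [hB.1, hC.1]
      _ = t := trace_mul_comm _ _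
  have hst : star s = s := by
    calc star s = ((B * A)ᴴ).trace := (trace_conjTranspose _).symm
      _ = (Aᴴ * Bᴴ).trace := by rw [conjTranspose_mul]
      _ = (A * B).trace := by rw [hA.1, hB.1]
      _ = s := trace_mul_comm _ _
  have hM : A * (t • 1 - B * C) + C * (s • 1 - B * A)
      = t • A + s • C - A * (B * C) - C * (B * A) := by
    rw [mul_sub, mul_sub, Matrix.mul_smul, Matrix.mul_smul, mul_one, mul_one]
    abel
  refine PosSemidef.of_dotProduct_mulVec_nonneg ?_ ?_
  · show _ᴴ = _
    rw [hM]
    simp only [conjTranspose_sub, conjTranspose_add, conjTranspose_smul, conjTranspose_mul,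
      hA.1.eq, hB.1.eq, hC.1.eq, htr, hst, mul_assoc]
    abel
  · intro x
    obtain ⟨R, hRH, hRR⟩ := psd_sqrt_exists A hA
    obtain ⟨S, hSH, hSS⟩ := psd_sqrt_exists B hB
    obtain ⟨T, hTH, hTT⟩ := psd_sqrt_exists C hC
    set u := R *ᵥ x with hu
    set v := T *ᵥ x with hv
    set P := S * R with hP
    set Q := S * T with hQ
    set u' := P *ᵥ u with hu'
    set v' := Q *ᵥ v with hv'
    have h1 : star u ⬝ᵥ u = star x ⬝ᵥ (A *ᵥ x) := by
      rw [hu, dot_helper, hRH, hRR]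
    have h2 : star v ⬝ᵥ v = star x ⬝ᵥ (C *ᵥ x) := by
      rw [hv, dot_helper, hTH, hTT]
    have hABC : (P * R)ᴴ * (Q * T) = A * (B * C) := by
      simp only [hP, hQ, conjTranspose_mul, hRH, hSH, hTH, ← hRR, ← hSS, ← hTT, mul_assoc]
    have hCBA : (Q * T)ᴴ * (P * R) = C * (B * A) := by
      simp only [hP, hQ, conjTranspose_mul, hRH, hSH, hTH, ← hRR, ← hSS, ← hTT, mul_assoc]
    have h3 : star u' ⬝ᵥ v' = star x ⬝ᵥ ((A * (B * C)) *ᵥ x) := by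
      rw [hu', hv', hu, hv, mulVec_mulVec, mulVec_mulVec, dot_helper, hABC]
    have h4 : star v' ⬝ᵥ u' = star x ⬝ᵥ ((C * (B * A)) *ᵥ x) := by
      rw [hu', hv', hu, hv, mulVec_mulVec, mulVec_mulVec, dot_helper, hCBA]
    have key : star x ⬝ᵥ ((A * (t • 1 - B * C) + C * (s • 1 - B * A)) *ᵥ x)
        = t * (star u ⬝ᵥ u) + s * (star v ⬝ᵥ v) - star u' ⬝ᵥ v' - star v' ⬝ᵥ u' := by
      rw [h1, h2, h3, h4, hM]
      simp only [sub_mulVec, add_mulVec, smul_mulVec, dotProduct_sub, dotProduct_add,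
        dotProduct_smul, smul_eq_mul, mul_assoc]
    rw [key]
    have e1 : Qᴴ * Q = T * (B * T) := by
      simp only [hQ, conjTranspose_mul, hSH, hTH, ← hSS, mul_assoc]
    have e2 : (T * (B * T)).trace = (B * C).trace := by
      rw [trace_mul_comm, mul_assoc, hTT]
    have f1 : Pᴴ * P = R * (B * R) := by
      simp only [hP, conjTranspose_mul, hSH, hRH, ← hSS, mul_assoc]
    have f2 : (R * (B * R)).trace = (B * A).trace := by
      rw [trace_mul_comm, mul_assoc, hRR]
    have htQ : t = ((∑ i, ∑ j, Complex.normSq (Q i j) : ℝ) : ℂ) := by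
      rw [ht', ← e2, ← e1, trace_eq_sum_normSq]
    have hsP : s = ((∑ i, ∑ j, Complex.normSq (P i j) : ℝ) : ℂ) := by
      rw [hs', ← f2, ← f1, trace_eq_sum_normSq]
    rw [dot_self_real u, dot_self_real v, star_dot_comm u' v', htQ, hsP]
    set tQ := ∑ i, ∑ j, Complex.normSq (Q i j) with htQ'
    set tP := ∑ i, ∑ j, Complex.normSq (P i j) with htP'
    set a2 := ∑ i, Complex.normSq (u i) with ha2'
    set b2 := ∑ i, Complex.normSq (v i) with hb2'
    set c := star u' ⬝ᵥ v' with hc'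
    have hceq : (tQ : ℂ) * (a2 : ℝ) + (tP : ℂ) * (b2 : ℝ) - c - (starRingEnd ℂ) c
        = ((tQ * a2 + tP * b2 - 2 * c.re : ℝ) : ℂ) := by
      have hc := Complex.add_conj c
      push_cast at hc ⊢
      linear_combination -hc
    rw [hceq, Complex.zero_le_real]
    set α := ∑ i, Complex.normSq (u' i) with hα'
    set β := ∑ i, Complex.normSq (v' i) with hβ'
    set m := ∑ i, ‖u' i‖ * ‖v' i‖ with hm'
    have hαle : α ≤ tP * a2 := by
      rw [hα', htP', ha2', hu']; exact mulVec_normSq_le P u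
    have hβle : β ≤ tQ * b2 := by
      rw [hβ', htQ', hb2', hv']; exact mulVec_normSq_le Q v
    have hr : c.re ≤ m := by
      refine (Complex.re_le_norm c).trans ?_
      rw [hc', hm']
      calc ‖star u' ⬝ᵥ v'‖ ≤ ∑ i, ‖star (u' i) * v' i‖ := by
            simpa [dotProduct] using
              norm_sum_le Finset.univ (fun i => star (u' i) * v' i)
        _ = ∑ i, ‖u' i‖ * ‖v' i‖ := by
            simp [norm_mul, RCLike.star_def]
    have hm2 : m ^ 2 ≤ α * β := by
      rw [hm', hα', hβ']
      simpa [Complex.sq_norm] using Finset.sum_mul_sq_le_sq_mul_sq Finset.univ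
        (fun i => ‖u' i‖) (fun i => ‖v' i‖)
    have hnn : ∀ w : Fin n → ℂ, (0:ℝ) ≤ ∑ i, Complex.normSq (w i) :=
      fun w => Finset.sum_nonneg fun i _ => Complex.normSq_nonneg _
    have ha20 : (0:ℝ) ≤ a2 := hnn u
    have hb20 : (0:ℝ) ≤ b2 := hnn v
    have hα0 : (0:ℝ) ≤ α := hnn u'
    have hβ0 : (0:ℝ) ≤ β := hnn v'
    have htP0 : (0:ℝ) ≤ tP :=
      Finset.sum_nonneg fun i _ => Finset.sum_nonneg fun j _ => Complex.normSq_nonneg _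
    have htQ0 : (0:ℝ) ≤ tQ :=
      Finset.sum_nonneg fun i _ => Finset.sum_nonneg fun j _ => Complex.normSq_nonneg _
    have hm0 : (0:ℝ) ≤ m :=
      Finset.sum_nonneg fun i _ => mul_nonneg (norm_nonneg _) (norm_nonneg _)
    have hprod : α * β ≤ (tP * a2) * (tQ * b2) :=
      mul_le_mul hαle hβle hβ0 (mul_nonneg htP0 ha20)
    nlinarith [sq_nonneg (tQ * a2 - tP * b2), sq_nonneg (tQ * a2 + tP * b2 - 2 * m),
      mul_nonneg htQ0 ha20, mul_nonneg htP0 hb20, hm2.trans hprod]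
end

section
/- For hermitean positive semidefinite n×n complex matrices A, B, C, the matrix (Tr(AB) I − AB)C + (Tr(CB) I − CB)A is positive semidefinite. -/
open Matrix
open scoped ComplexOrder

variable {n : ℕ}

lemma bform (P Q : Matrix (Fin n) (Fin n) ℂ) (x : Fin n → ℂ) :
    star x ⬝ᵥ (Pᴴ * Q) *ᵥ x = star (P *ᵥ x) ⬝ᵥ (Q *ᵥ x) := by
  rw [star_mulVec, ← mulVec_mulVec, dotProduct_mulVec]

lemma re_self_dot (w : Fin n → ℂ) :
    (star w ⬝ᵥ w).re = ∑ i, Complex.normSq (w i) := by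
  simp [dotProduct, Complex.re_sum, Complex.normSq_apply, mul_comm]

lemma cs_sq (u v : Fin n → ℂ) :
    (star u ⬝ᵥ v).re ^ 2 ≤ (star u ⬝ᵥ u).re * (star v ⬝ᵥ v).re := by
  rw [re_self_dot, re_self_dot]
  have h1 : (star u ⬝ᵥ v).re ^ 2 ≤ ‖star u ⬝ᵥ v‖ ^ 2 := by
    have := Complex.abs_re_le_norm (star u ⬝ᵥ v)
    nlinarith [abs_nonneg (star u ⬝ᵥ v).re, sq_abs (star u ⬝ᵥ v).re]
  refine h1.trans ?_
  have h2 : ‖star u ⬝ᵥ v‖ ≤ ∑ i, ‖u i‖ * ‖v i‖ := by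
    refine (norm_sum_le _ _).trans_eq (Finset.sum_congr rfl fun i _ => ?_)
    simp [norm_mul, Complex.norm_conj]
  have h3 : (∑ i, ‖u i‖ * ‖v i‖) ^ 2 ≤
      (∑ i, ‖u i‖ ^ 2) * (∑ i, ‖v i‖ ^ 2) :=
    Finset.sum_mul_sq_le_sq_mul_sq _ _ _
  have h4 : ‖star u ⬝ᵥ v‖ ^ 2 ≤
      (∑ i, ‖u i‖ ^ 2) * (∑ i, ‖v i‖ ^ 2) := by
    refine le_trans ?_ h3
    have hnn : (0:ℝ) ≤ ∑ i, ‖u i‖ * ‖v i‖ :=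
      Finset.sum_nonneg fun i _ => mul_nonneg (norm_nonneg _) (norm_nonneg _)
    exact pow_le_pow_left₀ (norm_nonneg _) h2 2
  simpa [Complex.sq_norm] using h4

lemma abs_sq_sum_le (f g : Fin n → ℂ) :
    Complex.normSq (∑ j, f j * g j) ≤ (∑ j, Complex.normSq (f j)) * (∑ j, Complex.normSq (g j)) := by
  have h2 : ‖∑ j, f j * g j‖ ≤ ∑ j, ‖f j‖ * ‖g j‖ := by
    refine (norm_sum_le _ _).trans_eq (Finset.sum_congr rfl fun i _ => ?_)
    simp [norm_mul]
  have h3 : (∑ j, ‖f j‖ * ‖g j‖) ^ 2 ≤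
      (∑ j, ‖f j‖ ^ 2) * (∑ j, ‖g j‖ ^ 2) :=
    Finset.sum_mul_sq_le_sq_mul_sq _ _ _
  calc Complex.normSq (∑ j, f j * g j) = ‖∑ j, f j * g j‖ ^ 2 := by
        rw [Complex.sq_norm]
    _ ≤ (∑ j, ‖f j‖ * ‖g j‖) ^ 2 :=
        pow_le_pow_left₀ (norm_nonneg _) h2 2
    _ ≤ (∑ j, ‖f j‖ ^ 2) * (∑ j, ‖g j‖ ^ 2) := h3
    _ = (∑ j, Complex.normSq (f j)) * (∑ j, Complex.normSq (g j)) := by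
        simp [Complex.sq_norm]

lemma trace_form_bound {M : Matrix (Fin n) (Fin n) ℂ} (hM : M.PosSemidef) (z : Fin n → ℂ) :
    (star z ⬝ᵥ M *ᵥ z).re ≤ M.trace.re * (star z ⬝ᵥ z).re := by
  obtain ⟨N, rfl⟩ : ∃ N : Matrix (Fin n) (Fin n) ℂ, M = Nᴴ * N :=
    by open scoped MatrixOrder in exact
      ⟨CFC.sqrt M, by rw [(CFC.sqrt_nonneg M).posSemidef.1.eq, CFC.sqrt_mul_sqrt_self M hM.nonneg]⟩
  rw [bform, re_self_dot, re_self_dot]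
  have htr : (Nᴴ * N).trace.re = ∑ i, ∑ j, Complex.normSq (N i j) := by
    simp [Matrix.trace, Matrix.diag, Matrix.mul_apply, Complex.re_sum,
      Complex.normSq_apply, mul_comm]
    rw [Finset.sum_comm]
  rw [htr]
  calc (∑ i, Complex.normSq ((N *ᵥ z) i))
      ≤ ∑ i, (∑ j, Complex.normSq (N i j)) * (∑ j, Complex.normSq (z j)) := by
        refine Finset.sum_le_sum fun i _ => ?_
        simpa [Matrix.mulVec, dotProduct] using abs_sq_sum_le (fun j => N i j) z
    _ = (∑ i, ∑ j, Complex.normSq (N i j)) * (∑ j, Complex.normSq (z j)) := by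
        rw [Finset.sum_mul]

lemma conj_form (P M : Matrix (Fin n) (Fin n) ℂ) (x : Fin n → ℂ) :
    star (P *ᵥ x) ⬝ᵥ (M *ᵥ (P *ᵥ x)) = star x ⬝ᵥ ((Pᴴ * M * P) *ᵥ x) := by
  rw [star_mulVec, mulVec_mulVec, dotProduct_mulVec, vecMul_vecMul,
    ← dotProduct_mulVec, ← Matrix.mul_assoc]

lemma self_dot_re_nonneg (w : Fin n → ℂ) : 0 ≤ (star w ⬝ᵥ w).re := by
  rw [re_self_dot]
  exact Finset.sum_nonneg fun i _ => Complex.normSq_nonneg _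

lemma psd_trace_re_nonneg {M : Matrix (Fin n) (Fin n) ℂ} (hM : M.PosSemidef) :
    0 ≤ M.trace.re := by
  obtain ⟨N, rfl⟩ : ∃ N : Matrix (Fin n) (Fin n) ℂ, M = Nᴴ * N :=
    by open scoped MatrixOrder in exact
      ⟨CFC.sqrt M, by rw [(CFC.sqrt_nonneg M).posSemidef.1.eq, CFC.sqrt_mul_sqrt_self M hM.nonneg]⟩
  have : (Nᴴ * N).trace.re = ∑ i, ∑ j, Complex.normSq (N i j) := by
    simp [Matrix.trace, Matrix.diag, Matrix.mul_apply, Complex.re_sum,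
      Complex.normSq_apply, mul_comm]
    rw [Finset.sum_comm]
  rw [this]
  exact Finset.sum_nonneg fun i _ => Finset.sum_nonneg fun j _ => Complex.normSq_nonneg _

lemma amgm_real {p τ₁ τ₂ a c uu vv : ℝ} (h1 : p ^ 2 ≤ uu * vv) (h2 : uu ≤ τ₁ * a)
    (h3 : vv ≤ τ₂ * c) (huu : 0 ≤ uu) (hvv : 0 ≤ vv) (hτ₁ : 0 ≤ τ₁) (hτ₂ : 0 ≤ τ₂)
    (ha : 0 ≤ a) (hc : 0 ≤ c) : 2 * p ≤ τ₁ * c + τ₂ * a := by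
  have h4 : p ^ 2 ≤ (τ₁ * c) * (τ₂ * a) := by nlinarith
  have hp : p ≤ Real.sqrt (τ₁ * c) * Real.sqrt (τ₂ * a) := by
    have h5 := Real.sqrt_le_sqrt h4
    rw [Real.sqrt_mul (mul_nonneg hτ₁ hc)] at h5
    calc p ≤ |p| := le_abs_self p
      _ = Real.sqrt (p ^ 2) := (Real.sqrt_sq_eq_abs p).symm
      _ ≤ _ := h5
  nlinarith [Real.sq_sqrt (mul_nonneg hτ₁ hc), Real.sq_sqrt (mul_nonneg hτ₂ ha),
    sq_nonneg (Real.sqrt (τ₁ * c) - Real.sqrt (τ₂ * a))]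

theorem lms_matrix_inequality_two {n : ℕ} (A B C : Matrix (Fin n) (Fin n) ℂ)
    (hA : A.PosSemidef) (hB : B.PosSemidef) (hC : C.PosSemidef) :
    (((A * B).trace • (1 : Matrix (Fin n) (Fin n) ℂ) - A * B) * C
      + ((C * B).trace • (1 : Matrix (Fin n) (Fin n) ℂ) - C * B) * A).PosSemidef := by
  set t₁ := (A * B).trace with ht₁def
  set t₂ := (C * B).trace with ht₂def
  obtain ⟨S, hSH, hS2⟩ : ∃ S : Matrix (Fin n) (Fin n) ℂ, Sᴴ = S ∧ S * S = A :=
    by open scoped MatrixOrder in exact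
      ⟨CFC.sqrt A, (CFC.sqrt_nonneg A).posSemidef.1, CFC.sqrt_mul_sqrt_self A hA.nonneg⟩
  obtain ⟨T, hTH, hT2⟩ : ∃ T : Matrix (Fin n) (Fin n) ℂ, Tᴴ = T ∧ T * T = C :=
    by open scoped MatrixOrder in exact
      ⟨CFC.sqrt C, (CFC.sqrt_nonneg C).posSemidef.1, CFC.sqrt_mul_sqrt_self C hC.nonneg⟩
  obtain ⟨W, hWH, hW2⟩ : ∃ W : Matrix (Fin n) (Fin n) ℂ, Wᴴ = W ∧ W * W = B :=
    by open scoped MatrixOrder in exact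
      ⟨CFC.sqrt B, (CFC.sqrt_nonneg B).posSemidef.1, CFC.sqrt_mul_sqrt_self B hB.nonneg⟩
  have hAH : Aᴴ = A := hA.1
  have hBH : Bᴴ = B := hB.1
  have hCH : Cᴴ = C := hC.1
  have ht1 : star t₁ = t₁ := by
    rw [ht₁def, ← Matrix.trace_conjTranspose, conjTranspose_mul, hAH, hBH, trace_mul_comm]
  have ht2 : star t₂ = t₂ := by
    rw [ht₂def, ← Matrix.trace_conjTranspose, conjTranspose_mul, hCH, hBH, trace_mul_comm]
  -- PSD of conjugated matrices and their traces
  have hSBS : (S * B * S).PosSemidef := by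
    have := hB.conjTranspose_mul_mul_same S; rwa [hSH] at this
  have hTBT : (T * B * T).PosSemidef := by
    have := hB.conjTranspose_mul_mul_same T; rwa [hTH] at this
  have htrS : (S * B * S).trace = t₁ := by
    rw [trace_mul_comm (S * B) S, ← Matrix.mul_assoc, hS2]
  have htrT : (T * B * T).trace = t₂ := by
    rw [trace_mul_comm (T * B) T, ← Matrix.mul_assoc, hT2]
  refine posSemidef_iff_dotProduct_mulVec.mpr ⟨?_, ?_⟩
  · show _ᴴ = _
    simp only [conjTranspose_add, conjTranspose_mul, conjTranspose_sub, conjTranspose_smul,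
      conjTranspose_one, hAH, hBH, hCH, ht1, ht2]
    noncomm_ring
  intro x
  set u := (W * A) *ᵥ x with hudef
  set v := (W * C) *ᵥ x with hvdef
  set p := star u ⬝ᵥ v with hpdef
  have hABC : star x ⬝ᵥ ((A * B * C) *ᵥ x) = p := by
    have h : A * B * C = (W * A)ᴴ * (W * C) := by
      rw [conjTranspose_mul, hWH, hAH, ← hW2]; noncomm_ring
    rw [h, bform]
  have hCBA : star x ⬝ᵥ ((C * B * A) *ᵥ x) = star v ⬝ᵥ u := by
    have h : C * B * A = (W * C)ᴴ * (W * A) := by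
      rw [conjTranspose_mul, hWH, hCH, ← hW2]; noncomm_ring
    rw [h, bform]
  have hstarp : star v ⬝ᵥ u = star p := star_dotProduct v u
  have hbig : ((t₁ • 1 - A * B) * C + (t₂ • 1 - C * B) * A)
      = t₁ • C + t₂ • A - (A * B * C + C * B * A) := by
    simp only [sub_mul, smul_mul_assoc, one_mul]
    abel
  have hz : star x ⬝ᵥ (((t₁ • 1 - A * B) * C + (t₂ • 1 - C * B) * A) *ᵥ x)
      = t₁ * (star x ⬝ᵥ (C *ᵥ x)) + t₂ * (star x ⬝ᵥ (A *ᵥ x)) - (p + star p) := by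
    rw [hbig, ← hstarp, ← hCBA, ← hABC]
    simp [sub_mulVec, add_mulVec, smul_mulVec, dotProduct_sub, dotProduct_add,
      dotProduct_smul, smul_eq_mul]
  rw [hz]
  -- nonnegativity data
  have ha' := hC.dotProduct_mulVec_nonneg x
  have hc0 : (star x ⬝ᵥ (C *ᵥ x)).im = 0 ∧ 0 ≤ (star x ⬝ᵥ (C *ᵥ x)).re := by
    have := hC.dotProduct_mulVec_nonneg x; rw [Complex.le_def] at this
    exact ⟨this.2.symm, by simpa using this.1⟩
  have ha0 : (star x ⬝ᵥ (A *ᵥ x)).im = 0 ∧ 0 ≤ (star x ⬝ᵥ (A *ᵥ x)).re := by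
    have := hA.dotProduct_mulVec_nonneg x; rw [Complex.le_def] at this
    exact ⟨this.2.symm, by simpa using this.1⟩
  have ht1im : t₁.im = 0 := by
    have := ht1; rwa [Complex.star_def, Complex.conj_eq_iff_im] at this
  have ht2im : t₂.im = 0 := by
    have := ht2; rwa [Complex.star_def, Complex.conj_eq_iff_im] at this
  have hτ₁ : 0 ≤ t₁.re := by
    have := psd_trace_re_nonneg hSBS; rwa [htrS] at this
  have hτ₂ : 0 ≤ t₂.re := by
    have := psd_trace_re_nonneg hTBT; rwa [htrT] at this
  -- quadratic form bounds
  have hA_dot : star x ⬝ᵥ (A *ᵥ x) = star (S *ᵥ x) ⬝ᵥ (S *ᵥ x) := by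
    rw [← bform, hSH, hS2]
  have hC_dot : star x ⬝ᵥ (C *ᵥ x) = star (T *ᵥ x) ⬝ᵥ (T *ᵥ x) := by
    rw [← bform, hTH, hT2]
  have huu : (star u ⬝ᵥ u).re ≤ t₁.re * (star x ⬝ᵥ (A *ᵥ x)).re := by
    have h1 : star u ⬝ᵥ u = star (S *ᵥ x) ⬝ᵥ ((S * B * S) *ᵥ (S *ᵥ x)) := by
      rw [hudef, ← bform, conj_form, hSH]
      have hm : (W * A)ᴴ * (W * A) = S * (S * B * S) * S := by
        rw [conjTranspose_mul, hWH, hAH, ← hS2, ← hW2]; noncomm_ring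
      rw [hm]
    have h2 := trace_form_bound hSBS (S *ᵥ x)
    rw [← h1, htrS] at h2
    rwa [hA_dot]
  have hvv : (star v ⬝ᵥ v).re ≤ t₂.re * (star x ⬝ᵥ (C *ᵥ x)).re := by
    have h1 : star v ⬝ᵥ v = star (T *ᵥ x) ⬝ᵥ ((T * B * T) *ᵥ (T *ᵥ x)) := by
      rw [hvdef, ← bform, conj_form, hTH]
      have hm : (W * C)ᴴ * (W * C) = T * (T * B * T) * T := by
        rw [conjTranspose_mul, hWH, hCH, ← hT2, ← hW2]; noncomm_ring
      rw [hm]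
    have h2 := trace_form_bound hTBT (T *ᵥ x)
    rw [← h1, htrT] at h2
    rwa [hC_dot]
  have hcs := cs_sq u v
  have hkey : 2 * p.re ≤ t₁.re * (star x ⬝ᵥ (C *ᵥ x)).re
      + t₂.re * (star x ⬝ᵥ (A *ᵥ x)).re :=
    amgm_real hcs huu hvv (self_dot_re_nonneg u) (self_dot_re_nonneg v) hτ₁ hτ₂
      ha0.2 hc0.2
  rw [Complex.le_def]
  constructor
  · simp only [Complex.zero_re, Complex.sub_re, Complex.add_re, Complex.mul_re,
      ht1im, ht2im, hc0.1, ha0.1, Complex.conj_re, Complex.star_def]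
    simp only [mul_zero, zero_mul, sub_zero]
    linarith [hkey]
  · simp [Complex.sub_im, Complex.add_im, Complex.mul_im, ht1im, ht2im, hc0.1, ha0.1,
      Complex.star_def, Complex.conj_im]
end

section
/- The truncation map sending a hermitean 2×2 matrix ρ = (1/2)(f I + s·σ) to R = (1/2)(F I + Σ·σ), where F = min(max(f,0),2) and Σ = s if s·s ≤ min(F²,(2−F)²), else Σ = min(F,2−F) s/|s|, is Lipschitz continuous with respect to the Frobenius norm on the set where it is defined (e.g., restricted to s ≠ 0 or interpreting Σ = 0 when s = 0). -/
open Matrix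

noncomputable def pauli : Fin 3 → Matrix (Fin 2) (Fin 2) ℂ :=
  ![!![0, 1; 1, 0], !![0, Complex.I; -Complex.I, 0], !![1, 0; 0, -1]]

noncomputable def dotPauli (v : Fin 3 → ℝ) : Matrix (Fin 2) (Fin 2) ℂ :=
  ∑ i : Fin 3, (v i : ℂ) • pauli i

/-- The matrix `(1/2)(f I + s·σ)` associated to `(f, s) ∈ ℝ × ℝ³`. -/
noncomputable def mkRho (f : ℝ) (s : Fin 3 → ℝ) : Matrix (Fin 2) (Fin 2) ℂ :=
  (2⁻¹ : ℂ) • ((f : ℂ) • (1 : Matrix (Fin 2) (Fin 2) ℂ) + dotPauli s)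

/-- Truncated number density `F = min(max(f,0),2)`. -/
noncomputable def truncF (f : ℝ) : ℝ := min (max f 0) 2

/-- Truncated spin vector, interpreted as `0` when `s = 0` (division by `|s| = 0`). -/
noncomputable def truncS (f : ℝ) (s : Fin 3 → ℝ) : Fin 3 → ℝ :=
  if s ⬝ᵥ s ≤ min (truncF f ^ 2) ((2 - truncF f) ^ 2) then s
  else (min (truncF f) (2 - truncF f) / Real.sqrt (s ⬝ᵥ s)) • s

/-- Frobenius norm of a 2×2 complex matrix. -/
noncomputable def frob (M : Matrix (Fin 2) (Fin 2) ℂ) : ℝ :=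
  Real.sqrt (∑ i : Fin 2, ∑ j : Fin 2, ‖M i j‖ ^ 2)

/-! ### Auxiliary material -/

lemma mkRho_sub (a b : ℝ) (s t : Fin 3 → ℝ) :
    mkRho a s - mkRho b t = mkRho (a - b) (s - t) := by
  simp only [mkRho, dotPauli, ← smul_sub]
  congr 1
  have : ∑ i : Fin 3, (((s - t) i : ℂ)) • pauli i
      = ∑ i : Fin 3, ((s i : ℂ) • pauli i - (t i : ℂ) • pauli i) := by
    refine Finset.sum_congr rfl fun i _ => ?_
    simp [sub_smul]
  rw [this, Finset.sum_sub_distrib]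
  push_cast
  rw [sub_smul]
  abel

lemma frob_mkRho (f : ℝ) (s : Fin 3 → ℝ) :
    frob (mkRho f s) = Real.sqrt ((f ^ 2 + s ⬝ᵥ s) / 2) := by
  unfold frob mkRho dotPauli pauli
  congr 1
  simp [Fin.sum_univ_succ, dotProduct, Matrix.smul_apply, Matrix.add_apply, Matrix.one_apply]
  simp only [mul_pow, Complex.sq_norm, Complex.normSq_apply, Complex.add_re, Complex.add_im,
    Complex.sub_re, Complex.sub_im, Complex.mul_re, Complex.mul_im, Complex.I_re, Complex.I_im,
    Complex.ofReal_re, Complex.ofReal_im, Complex.neg_re, Complex.neg_im]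
  ring

local notation "E3" => EuclideanSpace ℝ (Fin 3)

/-- projection onto the closed ball of radius `r` -/
noncomputable def projB (r : ℝ) (v : E3) : E3 := if ‖v‖ ≤ r then v else (r / ‖v‖) • v

lemma sq_norm_le (u : E3) (c : ℝ) (hc : 0 ≤ c) (h : ‖u‖ ^ 2 ≤ c ^ 2) : ‖u‖ ≤ c := by
  nlinarith [norm_nonneg u]

lemma projB_lip_radius {r r' : ℝ} (hr : 0 ≤ r) (hr' : 0 ≤ r') (x : E3) :
    ‖projB r x - projB r' x‖ ≤ |r - r'| := by
  have key : ∀ a b : ℝ, 0 ≤ a → a ≤ b → ‖projB b x - projB a x‖ ≤ |b - a| := by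
    intro a b ha hab
    by_cases h1 : ‖x‖ ≤ a
    · rw [projB, projB, if_pos h1, if_pos (h1.trans hab), sub_self, norm_zero]
      exact abs_nonneg _
    · push_neg at h1
      have hx : (0:ℝ) < ‖x‖ := lt_of_le_of_lt ha h1
      by_cases h2 : ‖x‖ ≤ b
      · rw [projB, projB, if_pos h2, if_neg (not_le.2 h1)]
        have he : x - (a / ‖x‖) • x = (1 - a / ‖x‖) • x := by
          rw [sub_smul, one_smul]
        have h3 : a / ‖x‖ ≤ 1 := by rw [div_le_one hx]; exact h1.le
        rw [he, norm_smul, Real.norm_eq_abs, abs_of_nonneg (by linarith),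
          abs_of_nonneg (by linarith)]
        have : (1 - a / ‖x‖) * ‖x‖ = ‖x‖ - a := by field_simp
        rw [this]; linarith
      · push_neg at h2
        rw [projB, projB, if_neg (not_le.2 h2), if_neg (not_le.2 h1)]
        have he : (b / ‖x‖) • x - (a / ‖x‖) • x = ((b - a) / ‖x‖) • x := by
          rw [← sub_smul, div_sub_div_same]
        rw [he, norm_smul, Real.norm_eq_abs, abs_div, abs_of_pos hx, div_mul_cancel₀]
        exact hx.ne'
  rcases le_total r' r with h | h
  · exact key r' r hr' h
  · rw [norm_sub_rev, abs_sub_comm]; exact key r r' hr h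

lemma projB_lip_vec {r : ℝ} (hr : 0 ≤ r) (x y : E3) :
    ‖projB r x - projB r y‖ ≤ ‖x - y‖ := by
  have cs : ∀ u v : E3, inner ℝ u v ≤ ‖u‖ * ‖v‖ := fun u v => real_inner_le_norm u v
  have key : ∀ u v : E3, ‖u‖ ≤ r → r < ‖v‖ → ‖u - projB r v‖ ≤ ‖u - v‖ := by
    intro u v hu hv
    have hvpos : (0:ℝ) < ‖v‖ := lt_of_le_of_lt hr hv
    rw [projB, if_neg (not_le.2 hv)]
    apply sq_norm_le _ _ (norm_nonneg _)
    rw [norm_sub_sq_real, norm_sub_sq_real, real_inner_smul_right, norm_smul,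
      Real.norm_eq_abs, abs_div, abs_of_nonneg hr, abs_of_pos hvpos]
    set a := ‖u‖; set b := ‖v‖; set d := inner ℝ u v
    have hd : d ≤ a * b := cs u v
    have ha : 0 ≤ a := norm_nonneg u
    have hc : r / b * b = r := div_mul_cancel₀ r hvpos.ne'
    have hc0 : 0 ≤ r / b := div_nonneg hr hvpos.le
    have hc1 : r / b ≤ 1 := by rw [div_le_one hvpos]; exact hv.le
    set c := r / b
    have expand : (c * b) ^ 2 = r ^ 2 := by rw [hc]
    have hd' : d ≤ c * b ^ 2 := by nlinarith [mul_le_mul_of_nonneg_right hu hvpos.le]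
    nlinarith [mul_nonneg (mul_nonneg (sub_nonneg.2 hc1) (sub_nonneg.2 hc1)) (sq_nonneg b),
      mul_nonneg (sub_nonneg.2 hc1) (sub_nonneg.2 hd')]
  by_cases h1 : ‖x‖ ≤ r <;> by_cases h2 : ‖y‖ ≤ r
  · rw [projB, projB, if_pos h1, if_pos h2]
  · push_neg at h2
    have := key x y h1 h2
    rw [projB, if_pos h1]
    simpa [projB, not_le.2 h2] using this
  · push_neg at h1
    have := key y x h2 h1
    rw [norm_sub_rev, norm_sub_rev x y]
    rw [projB, if_pos h2] at *
    simpa [projB, not_le.2 h1] using this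
  · push_neg at h1 h2
    have hxp : (0:ℝ) < ‖x‖ := lt_of_le_of_lt hr h1
    have hyp : (0:ℝ) < ‖y‖ := lt_of_le_of_lt hr h2
    rw [projB, projB, if_neg (not_le.2 h1), if_neg (not_le.2 h2)]
    apply sq_norm_le _ _ (norm_nonneg _)
    rw [norm_sub_sq_real, norm_sub_sq_real, real_inner_smul_right, real_inner_smul_left,
      norm_smul, norm_smul, Real.norm_eq_abs, Real.norm_eq_abs, abs_div, abs_div,
      abs_of_nonneg hr, abs_of_pos hxp, abs_of_pos hyp]
    set a := ‖x‖; set b := ‖y‖; set d := inner ℝ x y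
    have hd : d ≤ a * b := cs x y
    have hc1 : r / a * a = r := div_mul_cancel₀ r hxp.ne'
    have hc2 : r / b * b = r := div_mul_cancel₀ r hyp.ne'
    have h10 : 0 ≤ r / a := div_nonneg hr hxp.le
    have h20 : 0 ≤ r / b := div_nonneg hr hyp.le
    have h11 : r / a ≤ 1 := by rw [div_le_one hxp]; exact h1.le
    have h21 : r / b ≤ 1 := by rw [div_le_one hyp]; exact h2.le
    set c1 := r / a; set c2 := r / b
    have h1m : 0 ≤ 1 - c1 * c2 := by nlinarith
    have hprod : c1 * c2 * (a * b) = r ^ 2 := by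
      have : (c1 * a) * (c2 * b) = r * r := by rw [hc1, hc2]
      nlinarith [this]
    nlinarith [mul_nonneg (sub_nonneg.2 hd) h1m, sq_nonneg (a - b), hprod]

noncomputable def e' (x : Fin 3 → ℝ) : E3 := (WithLp.equiv 2 (Fin 3 → ℝ)).symm x

lemma dot_self_nonneg (x : Fin 3 → ℝ) : 0 ≤ x ⬝ᵥ x :=
  Finset.sum_nonneg fun i _ => mul_self_nonneg _

lemma norm_e' (x : Fin 3 → ℝ) : ‖e' x‖ = Real.sqrt (x ⬝ᵥ x) := by
  rw [e', EuclideanSpace.norm_eq]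
  congr 1
  simp [dotProduct, PiLp.toLp_apply, Real.norm_eq_abs, sq_abs, sq]

lemma sq_norm_e' (x : Fin 3 → ℝ) : ‖e' x‖ ^ 2 = x ⬝ᵥ x := by
  rw [norm_e', Real.sq_sqrt (dot_self_nonneg x)]

lemma e'_sub (x y : Fin 3 → ℝ) : e' (x - y) = e' x - e' y := by
  rw [e', e', e', WithLp.equiv_symm_apply, WithLp.toLp_sub]

noncomputable def mrad (f : ℝ) : ℝ := min (truncF f) (2 - truncF f)

lemma truncF_nonneg (f : ℝ) : 0 ≤ truncF f :=
  le_min (le_max_right f 0) (by norm_num)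

lemma truncF_le_two (f : ℝ) : truncF f ≤ 2 := min_le_right _ _

lemma mrad_nonneg (f : ℝ) : 0 ≤ mrad f :=
  le_min (truncF_nonneg f) (by linarith [truncF_le_two f])

lemma min_sq (f : ℝ) : min (truncF f ^ 2) ((2 - truncF f) ^ 2) = mrad f ^ 2 := by
  have h0 := truncF_nonneg f; have h2 := truncF_le_two f
  rcases le_total (truncF f) (2 - truncF f) with h | h
  · rw [mrad, min_eq_left h, min_eq_left (by nlinarith)]
  · rw [mrad, min_eq_right h, min_eq_right (by nlinarith)]

lemma e'_truncS (f : ℝ) (s : Fin 3 → ℝ) : e' (truncS f s) = projB (mrad f) (e' s) := by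
  have hcond : (s ⬝ᵥ s ≤ min (truncF f ^ 2) ((2 - truncF f) ^ 2)) ↔ ‖e' s‖ ≤ mrad f := by
    rw [min_sq, ← sq_norm_e']
    constructor
    · intro h
      have := Real.sqrt_le_sqrt h
      rwa [Real.sqrt_sq (norm_nonneg _), Real.sqrt_sq (mrad_nonneg f)] at this
    · intro h
      exact pow_le_pow_left₀ (norm_nonneg _) h 2
  by_cases h : s ⬝ᵥ s ≤ min (truncF f ^ 2) ((2 - truncF f) ^ 2)
  · rw [truncS, if_pos h, projB, if_pos (hcond.1 h)]
  · rw [truncS, if_neg h, projB, if_neg fun hh => h (hcond.2 hh), ← norm_e']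
    rw [e', e', WithLp.equiv_symm_apply, WithLp.toLp_smul]
    rfl

lemma abs_truncF_sub (f g : ℝ) : |truncF f - truncF g| ≤ |f - g| := by
  calc |truncF f - truncF g| ≤ max |max f 0 - max g 0| |(2:ℝ) - 2| :=
        abs_min_sub_min_le_max _ _ _ _
    _ ≤ |f - g| := by
        rw [sub_self, abs_zero]
        exact max_le (abs_max_sub_max_le_abs f g 0) (abs_nonneg _)

lemma abs_mrad_sub (f g : ℝ) : |mrad f - mrad g| ≤ |f - g| := by
  refine le_trans (abs_min_sub_min_le_max _ _ _ _) (max_le (abs_truncF_sub f g) ?_)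
  rw [show (2:ℝ) - truncF f - (2 - truncF g) = -(truncF f - truncF g) by ring, abs_neg]
  exact abs_truncF_sub f g

lemma truncS_lip (f₁ f₂ : ℝ) (s₁ s₂ : Fin 3 → ℝ) :
    ‖e' (truncS f₁ s₁) - e' (truncS f₂ s₂)‖ ≤ ‖e' s₁ - e' s₂‖ + |f₁ - f₂| := by
  rw [e'_truncS, e'_truncS]
  calc ‖projB (mrad f₁) (e' s₁) - projB (mrad f₂) (e' s₂)‖
      ≤ ‖projB (mrad f₁) (e' s₁) - projB (mrad f₂) (e' s₁)‖ +
        ‖projB (mrad f₂) (e' s₁) - projB (mrad f₂) (e' s₂)‖ := by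
        have := norm_add_le (projB (mrad f₁) (e' s₁) - projB (mrad f₂) (e' s₁))
          (projB (mrad f₂) (e' s₁) - projB (mrad f₂) (e' s₂))
        simpa using this
    _ ≤ |mrad f₁ - mrad f₂| + ‖e' s₁ - e' s₂‖ :=
        add_le_add (projB_lip_radius (mrad_nonneg f₁) (mrad_nonneg f₂) _)
          (projB_lip_vec (mrad_nonneg f₂) _ _)
    _ ≤ ‖e' s₁ - e' s₂‖ + |f₁ - f₂| := by
        rw [add_comm]; exact add_le_add le_rfl (abs_mrad_sub f₁ f₂)

theorem truncation_lipschitz :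
    ∃ L > 0, ∀ (f₁ f₂ : ℝ) (s₁ s₂ : Fin 3 → ℝ),
      frob (mkRho (truncF f₁) (truncS f₁ s₁) - mkRho (truncF f₂) (truncS f₂ s₂)) ≤
        L * frob (mkRho f₁ s₁ - mkRho f₂ s₂) := by
  refine ⟨2, by norm_num, fun f₁ f₂ s₁ s₂ => ?_⟩
  rw [mkRho_sub, mkRho_sub, frob_mkRho, frob_mkRho]
  set A := truncF f₁ - truncF f₂ with hA
  set u := truncS f₁ s₁ - truncS f₂ s₂ with hu
  set a := f₁ - f₂ with ha
  set v := s₁ - s₂ with hv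
  have hF : |A| ≤ |a| := abs_truncF_sub f₁ f₂
  have hvec : ‖e' u‖ ≤ ‖e' v‖ + |a| := by
    rw [hu, hv, e'_sub, e'_sub]
    exact truncS_lip f₁ f₂ s₁ s₂
  have hdu : u ⬝ᵥ u = ‖e' u‖ ^ 2 := (sq_norm_e' u).symm
  have hdv : v ⬝ᵥ v = ‖e' v‖ ^ 2 := (sq_norm_e' v).symm
  have h4 : A ^ 2 + u ⬝ᵥ u ≤ 4 * (a ^ 2 + v ⬝ᵥ v) := by
    rw [hdu, hdv]
    have h1 : A ^ 2 ≤ a ^ 2 := by nlinarith [abs_nonneg A, sq_abs A, sq_abs a]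
    have h2 : ‖e' u‖ ^ 2 ≤ (‖e' v‖ + |a|) ^ 2 := by
      nlinarith [norm_nonneg (e' u), norm_nonneg (e' v), abs_nonneg a]
    nlinarith [sq_nonneg (‖e' v‖ - |a|), sq_abs a]
  have main : ∀ X Y : ℝ, X ≤ 4 * Y → Real.sqrt (X / 2) ≤ 2 * Real.sqrt (Y / 2) := by
    intro X Y hXY
    have h2sq : 2 * Real.sqrt (Y / 2) = Real.sqrt (4 * (Y / 2)) := by
      rw [show (4:ℝ) * (Y / 2) = 2 ^ 2 * (Y / 2) by ring,
        Real.sqrt_mul (by positivity), Real.sqrt_sq (by norm_num)]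
    rw [h2sq]
    apply Real.sqrt_le_sqrt
    linarith
  exact main _ _ h4
end
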